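/- arXiv:1811.03404 — 2 statements merged into one kernel-verified Lean document; each statement's English description precedes it below -/
import Mathlib

section
/- The kernel k(x,y) = 1/|x−y| is asymptotically smooth on ℝ³ × ℝ³: for all multi-indices α, β ∈ ℕ³ with α + β ≠ 0 and all x ≠ y, |D_x^α D_y^β k(x,y)| ≤ C (α+β)! |α+β|^r γ^{|α+β|} |x−y|^{−|α|−|β|−1} for some constants C, r, γ > 0 independent of x, y, α, β. -/
open Real

noncomputable def pderiv3 (i : Fin 3) (f : EuclideanSpace ℝ (Fin 3) → ℝ) :
    EuclideanSpace ℝ (Fin 3) → ℝ :=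
  fun x => deriv (fun t : ℝ => f (x + t • EuclideanSpace.single i (1 : ℝ))) 0

/-- Mixed partial derivative `D^α` for a multi-index `α : Fin 3 → ℕ`. -/
noncomputable def multiPDeriv (α : Fin 3 → ℕ) (f : EuclideanSpace ℝ (Fin 3) → ℝ) :
    EuclideanSpace ℝ (Fin 3) → ℝ :=
  ((pderiv3 0)^[α 0] ∘ (pderiv3 1)^[α 1] ∘ (pderiv3 2)^[α 2]) f

/-- order of a multi-index -/
def mAbs (α : Fin 3 → ℕ) : ℕ := α 0 + α 1 + α 2

/-- factorial of a multi-index -/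
def mFact (α : Fin 3 → ℕ) : ℕ := (α 0).factorial * (α 1).factorial * (α 2).factorial

namespace CKAux

local notation "E3" => EuclideanSpace ℝ (Fin 3)

def eI (i : Fin 3) : Fin 3 → ℕ := fun m => if m = i then 1 else 0

noncomputable def mono (μ : Fin 3 → ℕ) (x : E3) : ℝ :=
  (x 0) ^ (μ 0) * (x 1) ^ (μ 1) * (x 2) ^ (μ 2)

noncomputable def tval (n : ℕ) (p : ℝ × (Fin 3 → ℕ)) (x : E3) : ℝ :=
  p.1 * mono p.2 x * (‖x‖ ^ (2 * n + 1))⁻¹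

def childExp (i j : Fin 3) (μ : Fin 3 → ℕ) : Fin 3 → ℕ :=
  if μ i = 0 then μ + eI i else fun m => μ m + 2 * eI j m - eI i m

def children (n : ℕ) (i : Fin 3) (p : ℝ × (Fin 3 → ℕ)) : List (ℝ × (Fin 3 → ℕ)) :=
  [ ((p.1 * (p.2 i) : ℝ), childExp i 0 p.2),
    ((p.1 * (p.2 i) : ℝ), childExp i 1 p.2),
    ((p.1 * (p.2 i) : ℝ), childExp i 2 p.2),
    (-(p.1 * (2 * n + 1) : ℝ), p.2 + eI i) ]

def Good (n : ℕ) (F : E3 → ℝ) : Prop :=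
  ∃ T : List (ℝ × (Fin 3 → ℕ)),
    (∀ p ∈ T, mAbs p.2 = n) ∧
    ((T.map fun p => |p.1|).sum ≤ 6 ^ n * n.factorial) ∧
    ∀ x : E3, x ≠ 0 → F x = (T.map fun p => tval n p x).sum

lemma mAbs_childExp (i j : Fin 3) (μ : Fin 3 → ℕ) (hi : μ i ≠ 0) :
    mAbs (childExp i j μ) = mAbs μ + 1 := by
  fin_cases i <;> fin_cases j <;>
    simp_all [mAbs, childExp, eI, Fin.ext_iff] <;> omega

lemma mAbs_add_eI (i : Fin 3) (μ : Fin 3 → ℕ) : mAbs (μ + eI i) = mAbs μ + 1 := by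
  fin_cases i <;> simp [mAbs, eI, Fin.ext_iff] <;> omega

lemma mAbs_children (n : ℕ) (i : Fin 3) (p : ℝ × (Fin 3 → ℕ)) (h : mAbs p.2 = n) :
    ∀ q ∈ children n i p, mAbs q.2 = n + 1 := by
  intro q hq
  rcases eq_or_ne (p.2 i) 0 with h0 | h0
  · simp only [children, childExp, h0, if_pos rfl, List.mem_cons, List.mem_singleton,
      List.not_mem_nil, or_false] at hq
    rcases hq with rfl | rfl | rfl | rfl <;> simp [mAbs_add_eI, h]
  · simp only [children, List.mem_cons, List.mem_singleton, List.not_mem_nil, or_false] at hq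
    rcases hq with rfl | rfl | rfl | rfl <;>
      simp [mAbs_childExp _ _ _ h0, mAbs_add_eI, h]

lemma hasDerivAt_tval (n : ℕ) (i : Fin 3) (p : ℝ × (Fin 3 → ℕ))
    (x : E3) (hx : x ≠ 0) :
    HasDerivAt (fun t : ℝ => tval n p (x + t • EuclideanSpace.single i (1 : ℝ)))
      (((children n i p).map fun q => tval (n + 1) q x).sum) 0 := by
  obtain ⟨c, μ⟩ := p
  have hN : (0:ℝ) < ‖x‖ := norm_pos_iff.2 hx
  have hNne : (‖x‖ : ℝ) ≠ 0 := hN.ne'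
  set d : Fin 3 → ℝ := fun j => if j = i then 1 else 0 with hd
  set q : ℝ → ℝ := fun t => ‖x‖^2 + 2*(x i)*t + t^2 with hqdef
  have hline : ∀ t : ℝ, ‖x + t • EuclideanSpace.single i (1:ℝ)‖ = Real.sqrt (q t) := by
    intro t
    rw [← Real.sqrt_sq (norm_nonneg (x + t • EuclideanSpace.single i (1:ℝ)))]
    congr 1
    rw [norm_add_sq_real]
    simp [norm_smul, EuclideanSpace.norm_single, real_inner_smul_right,
      EuclideanSpace.inner_single_right, hqdef]
    ring
  have hcoord : ∀ (t : ℝ) (j : Fin 3),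
      (x + t • EuclideanSpace.single i (1:ℝ)) j = x j + t * d j := by
    intro t j
    simp [EuclideanSpace.single_apply, hd]
  have hfun : (fun t : ℝ => tval n (c, μ) (x + t • EuclideanSpace.single i (1:ℝ)))
      = fun t : ℝ => c * ((x 0 + t * d 0)^(μ 0) * (x 1 + t * d 1)^(μ 1) * (x 2 + t * d 2)^(μ 2)
          * ((Real.sqrt (q t)) ^ (2*n+1))⁻¹) := by
    funext t
    simp only [tval, mono]
    rw [hline]
    simp only [hcoord]
    ring
  have hb : ∀ j : Fin 3, HasDerivAt (fun t : ℝ => x j + t * d j) (d j) 0 := by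
    intro j
    simpa [mul_comm] using ((hasDerivAt_id (0:ℝ)).const_mul (d j)).const_add (x j)
  have hp : ∀ j : Fin 3, HasDerivAt (fun t : ℝ => (x j + t * d j)^(μ j))
      ((μ j : ℝ) * (x j)^(μ j - 1) * d j) 0 := by
    intro j
    simpa using (hb j).fun_pow (μ j)
  have hq : HasDerivAt q (2 * x i) 0 := by
    have h := ((hasDerivAt_id (0:ℝ)).const_mul (2*(x i))).const_add (‖x‖^2) |>.add
      (hasDerivAt_pow 2 (0:ℝ))
    refine h.congr_deriv (Eq.symm ?_)
    ring
  have hq0 : q 0 = ‖x‖^2 := by simp [hqdef]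
  have hq0ne : q 0 ≠ 0 := by rw [hq0]; positivity
  have hsqrt : HasDerivAt (fun t => Real.sqrt (q t)) (x i / ‖x‖) 0 := by
    have h := (Real.hasDerivAt_sqrt hq0ne).comp 0 hq
    refine h.congr_deriv (Eq.symm ?_)
    rw [hq0, Real.sqrt_sq hN.le]
    field_simp
  have hs0 : Real.sqrt (q 0) = ‖x‖ := by rw [hq0, Real.sqrt_sq hN.le]
  have hpowN : HasDerivAt (fun t => (Real.sqrt (q t)) ^ (2*n+1))
      ((2*(n:ℝ)+1) * ‖x‖^(2*n) * (x i / ‖x‖)) 0 := by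
    have h := hsqrt.fun_pow (2*n+1)
    have : ((2*n+1 : ℕ) : ℝ) = 2*(n:ℝ)+1 := by push_cast; ring
    simpa [hs0, this] using h
  have hNpow : (‖x‖ : ℝ)^(2*n+1) ≠ 0 := by positivity
  have hinv : HasDerivAt (fun t => ((Real.sqrt (q t)) ^ (2*n+1))⁻¹)
      (-(((2*(n:ℝ)+1) * ‖x‖^(2*n) * (x i / ‖x‖))) / (‖x‖^(2*n+1))^2) 0 := by
    have h := hpowN.fun_inv (by rw [hs0]; exact hNpow)
    simpa [hs0] using h
  have htot := ((((hp 0).mul (hp 1)).mul (hp 2)).mul hinv).const_mul c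
  rw [hfun]
  refine htot.congr_deriv (Eq.symm ?_)
  -- now the value identity
  simp only [zero_mul, add_zero, mul_zero, mul_one, hs0, hd]
  simp only [children, List.map_cons, List.map_nil, List.sum_cons, List.sum_nil, add_zero, tval]
  have hsq : (x 0)^2 + (x 1)^2 + (x 2)^2 = ‖x‖^2 := by
    have h := EuclideanSpace.norm_eq x
    rw [show (∑ j, ‖x j‖^2) = ‖x 0‖^2 + ‖x 1‖^2 + ‖x 2‖^2 from by
      rw [Fin.sum_univ_three]] at h
    rw [h, Real.sq_sqrt (by positivity)]
    simp [sq_abs]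
  have hKey : ∀ (A : ℝ) (m u v : ℕ),
      A * ((x 0)^(m+2) * (x 1)^u * (x 2)^v)
        + A * ((x 0)^m * (x 1)^(u+2) * (x 2)^v)
        + A * ((x 0)^m * (x 1)^u * (x 2)^(v+2))
      = A * ((x 0)^m * (x 1)^u * (x 2)^v) * ‖x‖^2 := by
    intro A m u v
    rw [← hsq]
    ring
  have e0 : (⟨0, by omega⟩ : Fin 3) = (0:Fin 3) := rfl
  have e1 : (⟨1, by omega⟩ : Fin 3) = (1:Fin 3) := rfl
  have e2 : (⟨2, by omega⟩ : Fin 3) = (2:Fin 3) := rfl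
  fin_cases i
  · simp only [e0]
    rcases eq_or_ne (μ 0) 0 with h0 | h0
    · simp [childExp, mono, eI, h0]
      field_simp
      ring
    · obtain ⟨m, hm⟩ := Nat.exists_eq_succ_of_ne_zero h0
      simp [childExp, mono, eI, hm, Nat.add_sub_cancel]
      trans (c * (↑m + 1) * (x 0 ^ m * x 1 ^ μ 1 * x 2 ^ μ 2) * ‖x‖^2 *
          (‖x‖ ^ (2 * (n + 1) + 1))⁻¹ +
        -(c * (2 * ↑n + 1) * (x 0 ^ (m + 1 + 1) * x 1 ^ μ 1 * x 2 ^ μ 2) *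
          (‖x‖ ^ (2 * (n + 1) + 1))⁻¹))
      · rw [← hsq]; ring
      · field_simp; ring
  · simp only [e1]
    rcases eq_or_ne (μ 1) 0 with h0 | h0
    · simp [childExp, mono, eI, h0]
      field_simp
      ring
    · obtain ⟨m, hm⟩ := Nat.exists_eq_succ_of_ne_zero h0
      simp [childExp, mono, eI, hm, Nat.add_sub_cancel]
      trans (c * (↑m + 1) * (x 0 ^ μ 0 * x 1 ^ m * x 2 ^ μ 2) * ‖x‖^2 *
          (‖x‖ ^ (2 * (n + 1) + 1))⁻¹ +
        -(c * (2 * ↑n + 1) * (x 0 ^ μ 0 * x 1 ^ (m + 1 + 1) * x 2 ^ μ 2) *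
          (‖x‖ ^ (2 * (n + 1) + 1))⁻¹))
      · rw [← hsq]; ring
      · field_simp; ring
  · simp only [e2]
    rcases eq_or_ne (μ 2) 0 with h0 | h0
    · simp [childExp, mono, eI, h0]
      field_simp
      ring
    · obtain ⟨m, hm⟩ := Nat.exists_eq_succ_of_ne_zero h0
      simp [childExp, mono, eI, hm, Nat.add_sub_cancel]
      trans (c * (↑m + 1) * (x 0 ^ μ 0 * x 1 ^ μ 1 * x 2 ^ m) * ‖x‖^2 *
          (‖x‖ ^ (2 * (n + 1) + 1))⁻¹ +
        -(c * (2 * ↑n + 1) * (x 0 ^ μ 0 * x 1 ^ μ 1 * x 2 ^ (m + 1 + 1)) *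
          (‖x‖ ^ (2 * (n + 1) + 1))⁻¹))
      · rw [← hsq]; ring
      · field_simp; ring

lemma list_map_flatMap_sum {A B : Type*} (T : List A) (f : A → List B) (g : B → ℝ) :
    ((T.flatMap f).map g).sum = (T.map fun a => ((f a).map g).sum).sum := by
  induction T with
  | nil => simp
  | cons p T ih => simp [List.flatMap_cons, ih]

lemma list_sum_le_sum {A : Type*} (T : List A) (f g : A → ℝ) (h : ∀ a ∈ T, f a ≤ g a) :
    (T.map f).sum ≤ (T.map g).sum := by
  induction T with
  | nil => simp
  | cons p T ih =>
      simp only [List.map_cons, List.sum_cons]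
      exact add_le_add (h p (by simp)) (ih fun a ha => h a (by simp [ha]))

lemma list_sum_mul_right {A : Type*} (T : List A) (f : A → ℝ) (b : ℝ) :
    (T.map fun a => f a * b).sum = (T.map f).sum * b := by
  induction T with
  | nil => simp
  | cons p T ih => simp [ih, add_mul]

lemma good_step (n : ℕ) (i : Fin 3) (F : E3 → ℝ) (h : Good n F) :
    Good (n + 1) (pderiv3 i F) := by
  obtain ⟨T, hdeg, hsum, hF⟩ := h
  refine ⟨T.flatMap (children n i), ?_, ?_, ?_⟩
  · intro q hq
    rw [List.mem_flatMap] at hq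
    obtain ⟨p, hp, hq⟩ := hq
    exact mAbs_children n i p (hdeg p hp) q hq
  · rw [list_map_flatMap_sum]
    have step : ∀ p ∈ T, (((children n i p).map fun q => |q.1|).sum)
        ≤ |p.1| * (6 * ((n:ℝ) + 1)) := by
      intro p hp
      have hle : (p.2 i : ℝ) ≤ n := by
        have : p.2 i ≤ mAbs p.2 := by
          have := hdeg p hp
          fin_cases i <;> simp [mAbs] <;> omega
        exact_mod_cast (hdeg p hp) ▸ this
      have hc : (0:ℝ) ≤ |p.1| := abs_nonneg _
      simp only [children, List.map_cons, List.map_nil, List.sum_cons, List.sum_nil, add_zero,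
        abs_mul, abs_neg, Nat.abs_cast]
      have h2 : |(2 * (n:ℝ) + 1)| = 2 * (n:ℝ) + 1 := abs_of_nonneg (by positivity)
      rw [h2]
      nlinarith [mul_le_mul_of_nonneg_left hle hc,
        mul_nonneg hc (show (0:ℝ) ≤ (n:ℝ) by positivity), hc]
    calc (T.map fun p => ((children n i p).map fun q => |q.1|).sum).sum
        ≤ (T.map fun p => |p.1| * (6 * ((n:ℝ) + 1))).sum := list_sum_le_sum _ _ _ step
      _ = (T.map fun p => |p.1|).sum * (6 * ((n:ℝ) + 1)) := list_sum_mul_right _ _ _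
      _ ≤ ((6:ℝ) ^ n * n.factorial) * (6 * ((n:ℝ) + 1)) := by
          apply mul_le_mul_of_nonneg_right hsum (by positivity)
      _ = (6:ℝ) ^ (n + 1) * ((n + 1).factorial : ℝ) := by
          rw [Nat.factorial_succ]
          push_cast
          ring
  · intro x hx
    have e : EuclideanSpace.single i (1:ℝ) = EuclideanSpace.single i (1:ℝ) := rfl
    have hev : (fun t : ℝ => F (x + t • EuclideanSpace.single i (1:ℝ)))
        =ᶠ[nhds 0] fun t : ℝ =>
          (T.map fun p => tval n p (x + t • EuclideanSpace.single i (1:ℝ))).sum := by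
      have hcont : Continuous fun t : ℝ => x + t • EuclideanSpace.single i (1:ℝ) := by
        continuity
      have hopen : IsOpen {t : ℝ | x + t • EuclideanSpace.single i (1:ℝ) ≠ 0} :=
        isOpen_ne.preimage hcont
      have hmem : (0:ℝ) ∈ {t : ℝ | x + t • EuclideanSpace.single i (1:ℝ) ≠ 0} := by
        simpa using hx
      filter_upwards [hopen.mem_nhds hmem] with t ht
      exact hF _ ht
    have hsd : HasDerivAt
        (fun t : ℝ => (T.map fun p => tval n p (x + t • EuclideanSpace.single i (1:ℝ))).sum)
        ((T.map fun p => ((children n i p).map fun q => tval (n + 1) q x).sum).sum) 0 := by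
      clear hsum hdeg hF hev
      induction T with
      | nil => simpa using hasDerivAt_const (0:ℝ) (0:ℝ)
      | cons p T ih =>
          simp only [List.map_cons, List.sum_cons]
          exact (hasDerivAt_tval n i p x hx).add ih
    rw [pderiv3, hev.deriv_eq, hsd.deriv, list_map_flatMap_sum]

lemma good_iter (n m : ℕ) (i : Fin 3) (F : E3 → ℝ) (h : Good n F) :
    Good (n + m) ((pderiv3 i)^[m] F) := by
  induction m with
  | zero => exact h
  | succ m ih =>
      rw [Function.iterate_succ_apply']
      exact good_step _ _ _ ih

lemma good_multi (n : ℕ) (α : Fin 3 → ℕ) (F : E3 → ℝ) (h : Good n F) :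
    Good (n + mAbs α) (multiPDeriv α F) := by
  have h2 := good_iter n (α 2) 2 F h
  have h1 := good_iter (n + α 2) (α 1) 1 _ h2
  have h0 := good_iter (n + α 2 + α 1) (α 0) 0 _ h1
  have : n + α 2 + α 1 + α 0 = n + mAbs α := by simp [mAbs]; ring
  rw [this] at h0
  exact h0

lemma good_base : Good 0 (fun z : E3 => ‖z‖⁻¹) := by
  refine ⟨[(1, fun _ => 0)], ?_, ?_, ?_⟩
  · rintro p hp; simp at hp; subst hp; simp [mAbs]
  · simp
  · intro x hx; simp [tval, mono]

lemma abs_coord_le (x : E3) (j : Fin 3) : |x j| ≤ ‖x‖ := by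
  have h : |x j|^2 ≤ ∑ k, ‖x k‖^2 := by
    have := Finset.single_le_sum (f := fun k => ‖x k‖^2)
      (fun k _ => by positivity) (Finset.mem_univ j)
    simpa [sq_abs] using this
  calc |x j| = Real.sqrt (|x j|^2) := by rw [Real.sqrt_sq (abs_nonneg _)]
    _ ≤ Real.sqrt (∑ k, ‖x k‖^2) := Real.sqrt_le_sqrt h
    _ = ‖x‖ := (EuclideanSpace.norm_eq x).symm

lemma list_abs_sum_le {A : Type*} (T : List A) (f : A → ℝ) :
    |(T.map f).sum| ≤ (T.map fun a => |f a|).sum := by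
  induction T with
  | nil => simp
  | cons p T ih =>
      simp only [List.map_cons, List.sum_cons]
      exact (abs_add_le _ _).trans (by gcongr)

lemma abs_mono_le (μ : Fin 3 → ℕ) (x : E3) : |mono μ x| ≤ ‖x‖ ^ (mAbs μ) := by
  have hb : ∀ j : Fin 3, |x j| ^ (μ j) ≤ ‖x‖ ^ (μ j) := fun j =>
    pow_le_pow_left₀ (abs_nonneg _) (abs_coord_le x j) _
  calc |mono μ x| = |x 0| ^ (μ 0) * |x 1| ^ (μ 1) * |x 2| ^ (μ 2) := by
        simp [mono, abs_mul, abs_pow]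
    _ ≤ ‖x‖ ^ (μ 0) * ‖x‖ ^ (μ 1) * ‖x‖ ^ (μ 2) := by
        gcongr <;> first | exact abs_nonneg _ | exact abs_coord_le x _
    _ = ‖x‖ ^ (mAbs μ) := by rw [mAbs, ← pow_add, ← pow_add]

lemma abs_tval_le (n : ℕ) (p : ℝ × (Fin 3 → ℕ)) (hdeg : mAbs p.2 = n) (x : E3)
    (hx : x ≠ 0) : |tval n p x| ≤ |p.1| * (‖x‖ ^ (n + 1))⁻¹ := by
  have hN : (0:ℝ) < ‖x‖ := norm_pos_iff.2 hx
  have key : ‖x‖ ^ n * (‖x‖ ^ (2 * n + 1))⁻¹ = (‖x‖ ^ (n + 1))⁻¹ := by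
    rw [show 2 * n + 1 = n + (n + 1) by ring, pow_add]
    field_simp
  calc |tval n p x| = |p.1| * |mono p.2 x| * (‖x‖ ^ (2 * n + 1))⁻¹ := by
        rw [tval, abs_mul, abs_mul, abs_inv, abs_pow, abs_of_nonneg hN.le]
    _ ≤ |p.1| * ‖x‖ ^ n * (‖x‖ ^ (2 * n + 1))⁻¹ := by
        have hm := abs_mono_le p.2 x
        rw [hdeg] at hm
        exact mul_le_mul_of_nonneg_right
          (mul_le_mul_of_nonneg_left hm (abs_nonneg _)) (by positivity)
    _ = |p.1| * (‖x‖ ^ (n + 1))⁻¹ := by rw [mul_assoc, key]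

lemma good_bound (n : ℕ) (F : E3 → ℝ) (h : Good n F) (x : E3) (hx : x ≠ 0) :
    |F x| ≤ 6 ^ n * n.factorial * (‖x‖ ^ (n + 1))⁻¹ := by
  obtain ⟨T, hdeg, hsum, hF⟩ := h
  have hN : (0:ℝ) < ‖x‖ := norm_pos_iff.2 hx
  rw [hF x hx]
  calc |(T.map fun p => tval n p x).sum| ≤ (T.map fun p => |tval n p x|).sum :=
        list_abs_sum_le T _
    _ ≤ (T.map fun p => |p.1| * (‖x‖ ^ (n + 1))⁻¹).sum :=
        list_sum_le_sum _ _ _ fun p hp => abs_tval_le n p (hdeg p hp) x hx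
    _ = (T.map fun p => |p.1|).sum * (‖x‖ ^ (n + 1))⁻¹ := list_sum_mul_right _ _ _
    _ ≤ 6 ^ n * n.factorial * (‖x‖ ^ (n + 1))⁻¹ :=
        mul_le_mul_of_nonneg_right hsum (by positivity)

/-- translation commutes with pderiv3 -/
lemma pderiv3_translate (i : Fin 3) (f : E3 → ℝ) (v : E3) :
    pderiv3 i (fun z => f (z + v)) = fun z => pderiv3 i f (z + v) := by
  funext z
  simp only [pderiv3]
  congr 1
  funext t
  congr 1
  abel

lemma multiPDeriv_translate (α : Fin 3 → ℕ) (f : E3 → ℝ) (v : E3) :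
    multiPDeriv α (fun z => f (z + v)) = fun z => multiPDeriv α f (z + v) := by
  have key : ∀ (i : Fin 3) (m : ℕ) (g : E3 → ℝ),
      (pderiv3 i)^[m] (fun z => g (z + v)) = fun z => ((pderiv3 i)^[m] g) (z + v) := by
    intro i m
    induction m with
    | zero => intro g; rfl
    | succ m ih =>
        intro g
        rw [Function.iterate_succ_apply, pderiv3_translate, ih]
        simp [Function.iterate_succ_apply]
  simp only [multiPDeriv, Function.comp_def, key]

lemma pderiv3_neg (i : Fin 3) (f : E3 → ℝ) :
    pderiv3 i (fun z => -f z) = fun z => -pderiv3 i f z := by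
  funext z; simp only [pderiv3]; exact deriv.neg

/-- reflection: D^β_y f(c - y) = (-1)^{|β|} (D^β f)(c-y) -/
lemma pderiv3_reflect (i : Fin 3) (f : E3 → ℝ) (c : E3) :
    pderiv3 i (fun z => f (c - z)) = fun z => -pderiv3 i f (c - z) := by
  funext z
  simp only [pderiv3]
  have : (fun t : ℝ => f (c - (z + t • EuclideanSpace.single i (1:ℝ))))
      = fun t : ℝ => (fun s : ℝ => f ((c - z) + s • EuclideanSpace.single i (1:ℝ))) (-t) := by
    funext t
    congr 1
    module
  rw [this]
  have h := deriv_comp_neg (f := fun s : ℝ => f (c - z + s • EuclideanSpace.single i (1:ℝ)))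
    (x := (0:ℝ))
  simpa using h

lemma pderiv3_const_mul (i : Fin 3) (a : ℝ) (g : E3 → ℝ) :
    pderiv3 i (fun z => a * g z) = fun z => a * pderiv3 i g z := by
  funext z
  simp only [pderiv3]
  exact deriv_const_mul_field a

lemma iter_const_mul (i : Fin 3) (m : ℕ) (a : ℝ) (g : E3 → ℝ) :
    (pderiv3 i)^[m] (fun z => a * g z) = fun z => a * ((pderiv3 i)^[m] g) z := by
  induction m generalizing g with
  | zero => rfl
  | succ m ih =>
      rw [Function.iterate_succ_apply, pderiv3_const_mul, ih]
      rw [Function.iterate_succ_apply]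

lemma multiPDeriv_const_mul (α : Fin 3 → ℕ) (a : ℝ) (g : E3 → ℝ) :
    multiPDeriv α (fun z => a * g z) = fun z => a * multiPDeriv α g z := by
  simp only [multiPDeriv, Function.comp_def, iter_const_mul]

lemma iter_reflect (i : Fin 3) (m : ℕ) (g : E3 → ℝ) (c : E3) :
    (pderiv3 i)^[m] (fun z => g (c - z)) = fun z => (-1)^m * ((pderiv3 i)^[m] g) (c - z) := by
  induction m generalizing g with
  | zero => simp
  | succ m ih =>
      rw [Function.iterate_succ_apply, pderiv3_reflect]
      have : (fun z => -pderiv3 i g (c - z)) = fun z => (-1 : ℝ) * (pderiv3 i g) (c - z) := by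
        funext z; ring
      rw [this, iter_const_mul, ih]
      rw [Function.iterate_succ_apply]
      funext z
      ring

lemma multiPDeriv_reflect (β : Fin 3 → ℕ) (f : E3 → ℝ) (c : E3) :
    multiPDeriv β (fun z => f (c - z)) = fun z => (-1)^(mAbs β) * multiPDeriv β f (c - z) := by
  simp only [multiPDeriv, Function.comp_def]
  rw [iter_reflect, iter_const_mul, iter_reflect, iter_const_mul, iter_const_mul, iter_reflect]
  funext z
  simp only [mAbs]
  rw [pow_add, pow_add]
  ring

lemma two_pow_factorial (a b : ℕ) :
    (a + b).factorial ≤ 2 ^ (a + b) * (a.factorial * b.factorial) := by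
  have hch : (a + b).choose a ≤ 2 ^ (a + b) := by
    calc (a + b).choose a ≤ ∑ k ∈ Finset.range (a + b + 1), (a + b).choose k :=
          Finset.single_le_sum (f := fun k => (a + b).choose k) (fun k _ => Nat.zero_le _)
            (Finset.mem_range.2 (by omega))
      _ = 2 ^ (a + b) := Nat.sum_range_choose (a + b)
  calc (a + b).factorial = (a + b).choose a * a.factorial * b.factorial := by
        have h := Nat.choose_mul_factorial_mul_factorial (Nat.le_add_right a b)
        rw [Nat.add_sub_cancel_left] at h
        exact h.symm
    _ ≤ 2 ^ (a + b) * a.factorial * b.factorial := by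
        exact Nat.mul_le_mul_right _ (Nat.mul_le_mul_right _ hch)
    _ = 2 ^ (a + b) * (a.factorial * b.factorial) := by ring

lemma factorial_le_mFact (σ : Fin 3 → ℕ) :
    (mAbs σ).factorial ≤ 4 ^ (mAbs σ) * mFact σ := by
  have h1 := two_pow_factorial (σ 0 + σ 1) (σ 2)
  have h2 := two_pow_factorial (σ 0) (σ 1)
  have key : (σ 0 + σ 1 + σ 2).factorial ≤
      2 ^ (σ 0 + σ 1 + σ 2) * (2 ^ (σ 0 + σ 1) * (σ 0).factorial * (σ 1).factorial
        * (σ 2).factorial) := by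
    calc (σ 0 + σ 1 + σ 2).factorial
        ≤ 2 ^ (σ 0 + σ 1 + σ 2) * ((σ 0 + σ 1).factorial * (σ 2).factorial) := h1
      _ ≤ 2 ^ (σ 0 + σ 1 + σ 2) * (2 ^ (σ 0 + σ 1) * (σ 0).factorial * (σ 1).factorial
          * (σ 2).factorial) := by
          apply Nat.mul_le_mul_left
          calc (σ 0 + σ 1).factorial * (σ 2).factorial
              ≤ (2 ^ (σ 0 + σ 1) * ((σ 0).factorial * (σ 1).factorial)) * (σ 2).factorial :=
                Nat.mul_le_mul_right _ h2
            _ = 2 ^ (σ 0 + σ 1) * (σ 0).factorial * (σ 1).factorial * (σ 2).factorial := by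
                ring
  calc (mAbs σ).factorial ≤ 2 ^ (σ 0 + σ 1 + σ 2) * (2 ^ (σ 0 + σ 1) * (σ 0).factorial
        * (σ 1).factorial * (σ 2).factorial) := key
    _ ≤ 2 ^ (σ 0 + σ 1 + σ 2) * (2 ^ (σ 0 + σ 1 + σ 2) * (σ 0).factorial
        * (σ 1).factorial * (σ 2).factorial) := by
        apply Nat.mul_le_mul_left
        apply Nat.mul_le_mul_right
        apply Nat.mul_le_mul_right
        apply Nat.mul_le_mul_right
        exact Nat.pow_le_pow_right (by norm_num) (by omega)
    _ = 4 ^ (mAbs σ) * mFact σ := by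
        rw [mAbs, mFact]
        rw [show (4:ℕ) = 2 * 2 by norm_num, Nat.mul_pow]
        ring

end CKAux

open CKAux in
theorem coulomb_kernel_asymptotically_smooth :
    ∃ C r γ : ℝ, 0 < C ∧ 0 < r ∧ 0 < γ ∧
      ∀ (α β : Fin 3 → ℕ), α + β ≠ 0 →
        ∀ x y : EuclideanSpace ℝ (Fin 3), x ≠ y →
          |multiPDeriv α
              (fun x' => multiPDeriv β (fun y' => ‖x' - y'‖⁻¹) y) x|
            ≤ C * (mFact (α + β) : ℝ) * (mAbs (α + β) : ℝ) ^ r *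
                γ ^ (mAbs (α + β)) *
                ‖x - y‖ ^ (-(mAbs α : ℝ) - (mAbs β : ℝ) - 1) := by
  refine ⟨1, 1, 24, one_pos, one_pos, by norm_num, ?_⟩
  intro α β hαβ x y hxy
  have k : EuclideanSpace ℝ (Fin 3) → ℝ := fun z => ‖z‖⁻¹
  have hinner : (fun x' => multiPDeriv β (fun y' => ‖x' - y'‖⁻¹) y)
      = fun x' : EuclideanSpace ℝ (Fin 3) =>
        (-1:ℝ)^(mAbs β) * multiPDeriv β (fun z => ‖z‖⁻¹) (x' - y) := by
    funext x'
    exact congrFun (multiPDeriv_reflect β (fun z => ‖z‖⁻¹) x') y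
  rw [hinner]
  have houter : multiPDeriv α
        (fun x' : EuclideanSpace ℝ (Fin 3) =>
          (-1:ℝ)^(mAbs β) * multiPDeriv β (fun z => ‖z‖⁻¹) (x' - y)) x
      = (-1:ℝ)^(mAbs β) * multiPDeriv α (multiPDeriv β (fun z => ‖z‖⁻¹)) (x - y) := by
    have h1 : (fun x' : EuclideanSpace ℝ (Fin 3) =>
          (-1:ℝ)^(mAbs β) * multiPDeriv β (fun z => ‖z‖⁻¹) (x' - y))
        = fun x' : EuclideanSpace ℝ (Fin 3) =>
          (-1:ℝ)^(mAbs β) * multiPDeriv β (fun z => ‖z‖⁻¹) (x' + -y) := by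
      funext x'; rw [sub_eq_add_neg]
    rw [h1, multiPDeriv_const_mul, multiPDeriv_translate, sub_eq_add_neg]
  rw [houter, abs_mul]
  have habs1 : |(-1:ℝ)^(mAbs β)| = 1 := by rw [abs_pow]; simp
  rw [habs1, one_mul]
  set n := mAbs (α + β) with hn
  have hsplit : mAbs β + mAbs α = n := by
    simp only [hn, mAbs, Pi.add_apply]
    omega
  have hgood : Good n (multiPDeriv α (multiPDeriv β (fun z => ‖z‖⁻¹))) := by
    have h1 := good_multi 0 β _ good_base
    have h2 := good_multi (0 + mAbs β) α _ h1
    rw [show 0 + mAbs β + mAbs α = n by omega] at h2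
    exact h2
  have hxy' : x - y ≠ 0 := sub_ne_zero.2 hxy
  have hb := good_bound n _ hgood (x - y) hxy'
  have hnorm : (0:ℝ) < ‖x - y‖ := norm_pos_iff.2 hxy'
  have hcast : (n:ℝ) = (mAbs α : ℝ) + (mAbs β : ℝ) := by
    rw [← hsplit]; push_cast; ring
  have hrpow : ‖x - y‖ ^ (-(mAbs α : ℝ) - (mAbs β : ℝ) - 1) = (‖x - y‖ ^ (n + 1))⁻¹ := by
    have he : (-(mAbs α : ℝ) - (mAbs β : ℝ) - 1) = -(((n + 1 : ℕ)) : ℝ) := by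
      push_cast
      rw [hcast]
      ring
    rw [he, Real.rpow_neg hnorm.le, Real.rpow_natCast]
  rw [hrpow]
  have hn1 : 1 ≤ n := by
    rcases Function.ne_iff.1 hαβ with ⟨i, hi⟩
    have hne : (α + β) i ≠ 0 := by simpa using hi
    have : (α + β) i ≤ n := by
      rw [hn]
      fin_cases i <;> simp [mAbs] <;> omega
    omega
  have hfact : ((n.factorial : ℕ) : ℝ) ≤ 4 ^ n * (mFact (α + β) : ℝ) := by
    have := factorial_le_mFact (α + β)
    rw [← hn] at this
    exact_mod_cast this
  calc |multiPDeriv α (multiPDeriv β (fun z => ‖z‖⁻¹)) (x - y)|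
      ≤ 6 ^ n * n.factorial * (‖x - y‖ ^ (n + 1))⁻¹ := hb
    _ ≤ 1 * (mFact (α + β) : ℝ) * (n:ℝ) ^ (1:ℝ) * 24 ^ n * (‖x - y‖ ^ (n + 1))⁻¹ := by
        rw [Real.rpow_one, one_mul]
        apply mul_le_mul_of_nonneg_right _ (by positivity)
        calc (6:ℝ) ^ n * n.factorial ≤ 6 ^ n * (4 ^ n * (mFact (α + β) : ℝ)) :=
              mul_le_mul_of_nonneg_left hfact (by positivity)
          _ = (mFact (α + β) : ℝ) * 24 ^ n := by
              rw [show (24:ℝ) = 6 * 4 by norm_num, mul_pow]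
              ring
          _ ≤ (mFact (α + β) : ℝ) * (n:ℝ) * 24 ^ n := by
              have h1n : (1:ℝ) ≤ (n:ℝ) := by exact_mod_cast hn1
              have hMn : (mFact (α + β) : ℝ) ≤ (mFact (α + β) : ℝ) * (n:ℝ) :=
                le_mul_of_one_le_right (by positivity) h1n
              exact mul_le_mul_of_nonneg_right hMn (by positivity)
end

section
/- In a cluster tree in which every leaf has cardinality greater than n_min and every non-leaf node has at least two sons whose index sets form a disjoint partition of their parent, the number of leaves is at most #I / n_min and the total number of nodes is at most 2·#I/n_min − 1, where I is the root index set. -/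
/-- A rooted tree of clusters: each node carries an index set and a list of sons
(leaves have an empty list of sons). -/
inductive CTree (I : Type) where
  | mk (label : Finset I) (sons : List (CTree I)) : CTree I

namespace CTree

variable {I : Type}

def label : CTree I → Finset I
  | .mk s _ => s

def numNodes : CTree I → ℕ
  | .mk _ sons => 1 + (sons.attach.map (fun t => numNodes t.1)).sum
  decreasing_by have := List.sizeOf_lt_of_mem t.2; simp at this ⊢; omega

def numLeaves : CTree I → ℕ
  | .mk _ [] => 1
  | .mk _ (t :: ts) => ((t :: ts).attach.map (fun u => numLeaves u.1)).sum
  decreasing_by have := List.sizeOf_lt_of_mem u.2; simp at this ⊢; omega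

/-- Validity of a cluster tree: every leaf has more than `nmin` indices and
every non-leaf node is the disjoint union of its at least two sons. -/
inductive Valid [DecidableEq I] (nmin : ℕ) : CTree I → Prop
  | leaf (s : Finset I) (h : nmin < s.card) : Valid nmin (.mk s [])
  | node (s : Finset I) (sons : List (CTree I))
      (hlen : 2 ≤ sons.length)
      (hsons : ∀ t ∈ sons, Valid nmin t)
      (hdisj : sons.Pairwise fun a b => Disjoint a.label b.label)
      (hunion : (sons.map label).foldr (· ∪ ·) ∅ = s) :
      Valid nmin (.mk s sons)

end CTree

namespace CTreeAux

variable {I : Type} [DecidableEq I]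

lemma mem_foldr_union (l : List (Finset I)) (x : I) :
    x ∈ l.foldr (· ∪ ·) ∅ ↔ ∃ s ∈ l, x ∈ s := by
  induction l with
  | nil => simp
  | cons a t ih => simp [ih]

lemma card_foldr_union (l : List (Finset I)) (h : l.Pairwise Disjoint) :
    (l.foldr (· ∪ ·) ∅).card = (l.map Finset.card).sum := by
  induction l with
  | nil => simp
  | cons a t ih =>
    rcases List.pairwise_cons.1 h with ⟨ha, ht⟩
    have hd : Disjoint a (t.foldr (· ∪ ·) ∅) := by
      rw [Finset.disjoint_left]
      intro x hx hx'
      rcases (mem_foldr_union t x).1 hx' with ⟨s, hs, hxs⟩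
      exact (Finset.disjoint_left.1 (ha s hs)) hx hxs
    simp [List.foldr_cons, Finset.card_union_of_disjoint hd, ih ht]

lemma numLeaves_mk (s : Finset I) (sons : List (CTree I)) (h : sons ≠ []) :
    (CTree.mk s sons).numLeaves = (sons.map CTree.numLeaves).sum := by
  cases sons with
  | nil => exact absurd rfl h
  | cons a t => rw [CTree.numLeaves]; rw [List.attach_map_val]

lemma numNodes_mk (s : Finset I) (sons : List (CTree I)) :
    (CTree.mk s sons).numNodes = 1 + (sons.map CTree.numNodes).sum := by
  rw [CTree.numNodes]; rw [List.attach_map_val]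

lemma key (nmin : ℕ) (T : CTree I) (hT : CTree.Valid nmin T) :
    nmin * T.numLeaves ≤ T.label.card ∧ T.numNodes + 1 ≤ 2 * T.numLeaves := by
  induction hT with
  | leaf s h =>
    constructor
    · simp [CTree.numLeaves, CTree.label]; omega
    · simp [CTree.numNodes, CTree.numLeaves]
  | node s sons hlen hsons hdisj hunion ih =>
    have hne : sons ≠ [] := by rintro rfl; simp at hlen
    rw [numLeaves_mk s sons hne, numNodes_mk]
    have hlab : CTree.label (.mk s sons) = s := rfl
    rw [hlab]
    have hcard : s.card = (sons.map (fun t => t.label.card)).sum := by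
      rw [← hunion, card_foldr_union _ (by rwa [List.pairwise_map]), List.map_map]; rfl
    constructor
    · rw [hcard, ← List.sum_map_mul_left]
      exact List.sum_le_sum fun t ht => (ih t ht).1
    · have h1 : (sons.map (fun t => t.numNodes + 1)).sum ≤
          (sons.map (fun t => 2 * t.numLeaves)).sum :=
        List.sum_le_sum fun t ht => (ih t ht).2
      have h2 : (sons.map (fun t => t.numNodes + 1)).sum =
          (sons.map CTree.numNodes).sum + sons.length := by
        induction sons with
        | nil => simp
        | cons a t ih2 => simp at ih2 ⊢; omega
      have h3 : (sons.map (fun t => 2 * t.numLeaves)).sum =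
          2 * (sons.map CTree.numLeaves).sum := List.sum_map_mul_left _ _ _
      omega

end CTreeAux

theorem cluster_tree_size_bounds {I : Type} [DecidableEq I]
    (nmin : ℕ) (hnmin : 1 ≤ nmin) (T : CTree I) (hT : CTree.Valid nmin T) :
    (T.numLeaves : ℝ) ≤ (T.label.card : ℝ) / nmin ∧
      (T.numNodes : ℝ) ≤ 2 * (T.label.card : ℝ) / nmin - 1 := by
  obtain ⟨h1, h2⟩ := CTreeAux.key nmin T hT
  have hn : (0:ℝ) < nmin := by exact_mod_cast hnmin
  have hL : (T.numLeaves : ℝ) ≤ (T.label.card : ℝ) / nmin := by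
    rw [le_div_iff₀ hn]
    exact_mod_cast (Nat.mul_comm nmin T.numLeaves) ▸ h1
  refine ⟨hL, ?_⟩
  have h2' : (T.numNodes : ℝ) + 1 ≤ 2 * T.numLeaves := by exact_mod_cast h2
  have : 2 * (T.label.card : ℝ) / nmin = 2 * ((T.label.card : ℝ) / nmin) := by ring
  rw [this]
  nlinarith [hL]
end
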